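/- arXiv:1901.03672 — 2 statements merged into one kernel-verified Lean document; each statement's English description precedes it below -/
import Mathlib

section
/- Fix q ∈ ℂ with q ≠ 0, q ≠ 1, p ∈ ℂ with p² = q, and γ,δ ∈ ℂ, and let n ≥ 1. For every w ∈ ℂ∖{0} for which the denominators m(pw) − m(w/p), m(p²w) − m(w) and m(w) − m(w/p²) are all nonzero, ξ_1(w)·(𝔻(𝔻ξ_n))(w) = [(1 − q^n)/(q − 1)]·[p·(1 − q^{n−1})/(q − 1)]·ξ_{n−1}(w). -/
open Complex Finset

/-- The q-quadratic lattice m(w) = w⁻¹ + γδq·w. -/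
noncomputable def mu (q γ δ w : ℂ) : ℂ := w⁻¹ + γ * δ * q * w

/-- Divided-difference operator on the lattice m(w) (p² = q). -/
noncomputable def Dq (q γ δ p : ℂ) (f : ℂ → ℂ) (w : ℂ) : ℂ :=
  (f (p * w) - f (w / p)) / (mu q γ δ (p * w) - mu q γ δ (w / p))

/-- ξ_n(w) = ∏_{k=0}^{n−1}(1 + γδq^{2k+1} − q^k·m(w)). -/
noncomputable def xi (q γ δ : ℂ) (n : ℕ) (w : ℂ) : ℂ :=
  ∏ k ∈ Finset.range n, (1 + γ * δ * q^(2*k+1) - q^k * mu q γ δ w)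

noncomputable def gg (q a b : ℂ) (n : ℕ) (w : ℂ) : ℂ :=
  ∏ k ∈ Finset.range n, ((1 - a * q^k * w⁻¹) * (1 - b * q^k * w))

lemma xi_eq_gg (q γ δ : ℂ) (n : ℕ) (w : ℂ) (hw : w ≠ 0) :
    xi q γ δ n w = gg q 1 (γ*δ*q) n w := by
  unfold xi gg mu
  refine Finset.prod_congr rfl fun k _ => ?_
  field_simp
  ring

lemma mu_diff (q γ δ p w : ℂ) (hp0 : p ≠ 0) (hw : w ≠ 0) :
    mu q γ δ (p*w) - mu q γ δ (w/p) = (p - p⁻¹) * (γ*δ*q*w - w⁻¹) := by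
  unfold mu
  field_simp
  ring

lemma gg_diff (q p a b : ℂ) (hp : p^2 = q) (hp0 : p ≠ 0) (n : ℕ) (w : ℂ) (hw : w ≠ 0) :
    gg q a b n (p*w) - gg q a b n (w/p)
      = (1 - q^n) * p⁻¹ * (b*w - a*w⁻¹) * gg q (a*p) (b*p) (n-1) w := by
  cases n with
  | zero => simp [gg]
  | succ m =>
    subst hp
    have key1 : gg (p^2) a b (m+1) (p*w)
        = (1 - a*p⁻¹*w⁻¹) * (1 - b*p*(p^2)^m*w) * gg (p^2) (a*p) (b*p) m w := by
      unfold gg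
      rw [Finset.prod_mul_distrib, Finset.prod_mul_distrib,
        Finset.prod_range_succ', Finset.prod_range_succ]
      rw [show (∏ k ∈ Finset.range m, (1 - a * (p^2)^(k+1) * (p*w)⁻¹))
          = ∏ k ∈ Finset.range m, (1 - a*p * (p^2)^k * w⁻¹) from
        Finset.prod_congr rfl fun k _ => by rw [pow_succ]; field_simp]
      rw [show (∏ k ∈ Finset.range m, (1 - b * (p^2)^k * (p*w)))
          = ∏ k ∈ Finset.range m, (1 - b*p * (p^2)^k * w) from
        Finset.prod_congr rfl fun k _ => by ring]
      field_simp
    have key2 : gg (p^2) a b (m+1) (w/p)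
        = gg (p^2) (a*p) (b*p) m w * (1 - a*p*(p^2)^m*w⁻¹) * (1 - b*p⁻¹*w) := by
      unfold gg
      rw [Finset.prod_mul_distrib, Finset.prod_mul_distrib,
        Finset.prod_range_succ, Finset.prod_range_succ']
      rw [show (∏ k ∈ Finset.range m, (1 - a * (p^2)^k * (w/p)⁻¹))
          = ∏ k ∈ Finset.range m, (1 - a*p * (p^2)^k * w⁻¹) from
        Finset.prod_congr rfl fun k _ => by field_simp]
      rw [show (∏ k ∈ Finset.range m, (1 - b * (p^2)^(k+1) * (w/p)))
          = ∏ k ∈ Finset.range m, (1 - b*p * (p^2)^k * w) from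
        Finset.prod_congr rfl fun k _ => by rw [pow_succ]; field_simp]
      field_simp
    rw [key1, key2, show m + 1 - 1 = m from rfl]
    set G := gg (p^2) (a*p) (b*p) m w with hG
    rw [pow_succ]
    field_simp
    ring

lemma dq_gg (q p γ δ a b c : ℂ) (hq1 : q ≠ 1) (hp : p^2 = q) (hp0 : p ≠ 0)
    (n : ℕ) (w : ℂ) (hw : w ≠ 0)
    (hden : mu q γ δ (p*w) - mu q γ δ (w/p) ≠ 0)
    (hc : b*w - a*w⁻¹ = c * (γ*δ*q*w - w⁻¹)) :
    (gg q a b n (p*w) - gg q a b n (w/p)) / (mu q γ δ (p*w) - mu q γ δ (w/p))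
      = c * (1 - q^n)/(q-1) * gg q (a*p) (b*p) (n-1) w := by
  have hmd := mu_diff q γ δ p w hp0 hw
  have hX : γ*δ*q*w - w⁻¹ ≠ 0 := by
    intro h; apply hden; rw [hmd, h, mul_zero]
  have hq1' : q - 1 ≠ 0 := sub_ne_zero.mpr hq1
  have hpe : p - p⁻¹ = (q-1) * p⁻¹ := by
    field_simp
    linear_combination hp
  rw [gg_diff q p a b hp hp0 n w hw, hmd, hpe, hc]
  set X := γ*δ*q*w - w⁻¹ with hXdef
  field_simp

lemma xi_peel (q γ δ : ℂ) (k : ℕ) (w : ℂ) (hw : w ≠ 0) :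
    xi q γ δ (k+1) w = xi q γ δ 1 w * gg q q (γ*δ*q*q) k w := by
  rw [xi_eq_gg q γ δ (k+1) w hw, xi_eq_gg q γ δ 1 w hw]
  unfold gg
  rw [Finset.prod_range_succ', Finset.prod_range_one]
  rw [show (∏ j ∈ Finset.range k, ((1 - 1*q^(j+1)*w⁻¹)*(1 - γ*δ*q*q^(j+1)*w)))
      = ∏ j ∈ Finset.range k, ((1 - q*q^j*w⁻¹)*(1 - γ*δ*q*q*q^j*w)) from
    Finset.prod_congr rfl fun j _ => by rw [pow_succ]; ring]
  ring

theorem stmt_13 (q p γ δ : ℂ) (hq0 : q ≠ 0) (hq1 : q ≠ 1) (hp : p^2 = q)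
    (n : ℕ) (hn : 1 ≤ n) :
    ∀ w : ℂ, w ≠ 0 →
      mu q γ δ (p * w) - mu q γ δ (w / p) ≠ 0 →
      mu q γ δ (p^2 * w) - mu q γ δ w ≠ 0 →
      mu q γ δ w - mu q γ δ (w / p^2) ≠ 0 →
      xi q γ δ 1 w * Dq q γ δ p (Dq q γ δ p (fun v => xi q γ δ n v)) w
        = ((1 - q^n) / (q - 1)) * (p * (1 - q^(n-1)) / (q - 1)) * xi q γ δ (n-1) w := by
  intro w hw hd1 hd2 hd3
  have hp0 : p ≠ 0 := by
    intro h; apply hq0; rw [← hp, h]; ring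
  have hq1' : q - 1 ≠ 0 := sub_ne_zero.mpr hq1
  have hpw : p*w ≠ 0 := mul_ne_zero hp0 hw
  have hwp : w/p ≠ 0 := div_ne_zero hw hp0
  -- inner divided difference
  have hinner : ∀ v : ℂ, v ≠ 0 → mu q γ δ (p*v) - mu q γ δ (v/p) ≠ 0 →
      (xi q γ δ n (p*v) - xi q γ δ n (v/p)) / (mu q γ δ (p*v) - mu q γ δ (v/p))
        = (1-q^n)/(q-1) * gg q (1*p) (γ*δ*q*p) (n-1) v := by
    intro v hv hdv
    rw [xi_eq_gg q γ δ n (p*v) (mul_ne_zero hp0 hv),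
        xi_eq_gg q γ δ n (v/p) (div_ne_zero hv hp0)]
    rw [dq_gg q p γ δ 1 (γ*δ*q) 1 hq1 hp hp0 n v hv hdv (by ring)]
    ring
  have hd2' : mu q γ δ (p*(p*w)) - mu q γ δ ((p*w)/p) ≠ 0 := by
    rw [show p*(p*w) = p^2*w from by ring, mul_div_cancel_left₀ w hp0]
    exact hd2
  have hd3' : mu q γ δ (p*(w/p)) - mu q γ δ ((w/p)/p) ≠ 0 := by
    rw [show p*(w/p) = w from by field_simp, div_div, show p*p = p^2 from by ring]
    exact hd3
  have hA := hinner (p*w) hpw hd2'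
  have hB := hinner (w/p) hwp hd3'
  have hmd := mu_diff q γ δ p w hp0 hw
  have hX : γ*δ*q*w - w⁻¹ ≠ 0 := by
    intro h; apply hd1; rw [hmd, h, mul_zero]
  have hdiff := gg_diff q p (1*p) (γ*δ*q*p) hp hp0 (n-1) w hw
  simp only [Dq]
  rw [hA, hB, hmd]
  rw [show (1-q^n)/(q-1) * gg q (1*p) (γ*δ*q*p) (n-1) (p*w)
        - (1-q^n)/(q-1) * gg q (1*p) (γ*δ*q*p) (n-1) (w/p)
      = (1-q^n)/(q-1) * (gg q (1*p) (γ*δ*q*p) (n-1) (p*w)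
        - gg q (1*p) (γ*δ*q*p) (n-1) (w/p)) from by ring, hdiff]
  have hpe : p - p⁻¹ = (q-1) * p⁻¹ := by
    field_simp
    linear_combination hp
  rw [hpe]
  obtain ⟨m, rfl⟩ : ∃ m, n = m + 1 := ⟨n-1, (Nat.succ_pred_eq_of_pos hn).symm⟩
  simp only [Nat.add_sub_cancel]
  cases m with
  | zero =>
    simp
  | succ k =>
    simp only [Nat.add_sub_cancel]
    rw [xi_peel q γ δ k w hw]
    rw [show (1:ℂ)*p*p = q from by rw [← hp]; ring,
        show γ*δ*q*p*p = γ*δ*q*q from by rw [← hp]; ring]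
    set X := γ*δ*q*w - w⁻¹ with hXdef
    rw [show γ*δ*q*p*w - 1*p*w⁻¹ = p*X from by rw [hXdef]; ring]
    set G := gg q q (γ*δ*q*q) k w with hG
    set Y := xi q γ δ 1 w with hY
    field_simp
end

section
/- Fix q ∈ ℂ with q ≠ 0, q ≠ 1, p ∈ ℂ with p² = q, and γ,δ ∈ ℂ, and let n ≥ 1. For every w ∈ ℂ∖{0} for which the denominators m(p²w) − m(w) and m(w) − m(w/p²) are nonzero, ξ_1(w)·(𝕊(𝔻ξ_n))(w) = [(1 − q^n)/(q − 1)]·[ (1/2)·(1 − q·γδ·q^{2(n−1)})·(1 − q^{−(n−1)})·ξ_{n−1}(w) + ((1 + q^{n−1})/(2q^{n−1}))·ξ_n(w) ]. -/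
open Complex Finset

/-- Averaging operator on the lattice m(w) (p² = q). -/
noncomputable def Sq (p : ℂ) (f : ℂ → ℂ) (w : ℂ) : ℂ :=
  (f (p * w) + f (w / p)) / 2

lemma xiP (q γ δ w : ℂ) (hw : w ≠ 0) : ∀ n : ℕ,
    xi q γ δ n w * w^n
      = ∏ k ∈ Finset.range n, ((1 + γ*δ*q^(2*k+1))*w - q^k*(1 + γ*δ*q*w^2)) := by
  have hF : ∀ k : ℕ, (1 + γ*δ*q^(2*k+1) - q^k * mu q γ δ w) * w
      = (1 + γ*δ*q^(2*k+1))*w - q^k*(1 + γ*δ*q*w^2) := by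
    intro k; simp only [mu]
    linear_combination (-(q^k : ℂ)) * (inv_mul_cancel₀ hw)
  intro n
  induction n with
  | zero => simp [xi]
  | succ n ih =>
    rw [xi, Finset.prod_range_succ, ← xi, Finset.prod_range_succ, pow_succ]
    linear_combination ((1 + γ*δ*q^(2*n+1))*w - q^n*(1 + γ*δ*q*w^2)) * ih
      + xi q γ δ n w * w^n * hF n

lemma xiR (q γ δ w : ℂ) (hw : w ≠ 0) (hq0 : q ≠ 0) : ∀ n : ℕ,
    xi q γ δ n (w/q) * w^n
      = ∏ k ∈ Finset.range n, ((1 + γ*δ*q^(2*k+1))*w - q^(k+1) - γ*δ*q^k*w^2) := by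
  have hF : ∀ k : ℕ, (1 + γ*δ*q^(2*k+1) - q^k * mu q γ δ (w/q)) * w
      = (1 + γ*δ*q^(2*k+1))*w - q^(k+1) - γ*δ*q^k*w^2 := by
    intro k; simp only [mu, div_eq_mul_inv, mul_inv, inv_inv]
    linear_combination (-(q^(k+1) : ℂ)) * (inv_mul_cancel₀ hw)
      + (-(γ*δ*q^k*w^2)) * (mul_inv_cancel₀ hq0)
  intro n
  induction n with
  | zero => simp [xi]
  | succ n ih =>
    rw [xi, Finset.prod_range_succ, ← xi, Finset.prod_range_succ, pow_succ]
    linear_combination ((1 + γ*δ*q^(2*n+1))*w - q^(n+1) - γ*δ*q^n*w^2) * ih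
      + xi q γ δ n (w/q) * w^n * hF n

lemma lemA (q c w : ℂ) : ∀ n : ℕ,
    (1 - c*q*w) * ((∏ k ∈ Finset.range (n+1), ((1 + c*q^(2*k+1))*(q*w) - q^k*(1 + c*q*(q*w)^2)))
        - q^(n+1) * ∏ k ∈ Finset.range (n+1), ((1 + c*q^(2*k+1))*w - q^k*(1 + c*q*w^2)))
      = q^n * (q^(n+1) - 1) * (1 - c*q^2*w^2) * (1 - c*q^(n+1)*w) *
          ∏ k ∈ Finset.range n, ((1 + c*q^(2*k+1))*w - q^k*(1 + c*q*w^2)) := by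
  intro n
  induction n with
  | zero => simp only [Finset.prod_range_succ, Finset.prod_range_zero]; ring
  | succ n ih =>
    simp only [Finset.prod_range_succ] at ih ⊢
    linear_combination ((1 + c*q^(2*(n+1)+1))*(q*w) - q^(n+1)*(1 + c*q*(q*w)^2)) * ih

lemma lemB (q c w : ℂ) : ∀ n : ℕ,
    (w - 1) * ((∏ k ∈ Finset.range (n+1), ((1 + c*q^(2*k+1))*w - q^k*(1 + c*q*w^2)))
        - ∏ k ∈ Finset.range (n+1), ((1 + c*q^(2*k+1))*w - q^(k+1) - c*q^k*w^2))
      = (q^(n+1) - 1) * (1 - c*w^2) * (w - q^n) *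
          ∏ k ∈ Finset.range n, ((1 + c*q^(2*k+1))*w - q^k*(1 + c*q*w^2)) := by
  intro n
  induction n with
  | zero => simp only [Finset.prod_range_succ, Finset.prod_range_zero]; ring
  | succ n ih =>
    simp only [Finset.prod_range_succ] at ih ⊢
    linear_combination ((1 + c*q^(2*(n+1)+1))*w - q^(n+2) - c*q^(n+1)*w^2) * ih

theorem stmt_14 (q p γ δ : ℂ) (hq0 : q ≠ 0) (hq1 : q ≠ 1) (hp : p^2 = q)
    (n : ℕ) (hn : 1 ≤ n) :
    ∀ w : ℂ, w ≠ 0 →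
      mu q γ δ (p^2 * w) - mu q γ δ w ≠ 0 →
      mu q γ δ w - mu q γ δ (w / p^2) ≠ 0 →
      xi q γ δ 1 w * Sq p (Dq q γ δ p (fun v => xi q γ δ n v)) w
        = ((1 - q^n) / (q - 1)) *
          ( (1/2) * (1 - q * (γ*δ) * q^(2*(n-1))) * (1 - (q^(n-1))⁻¹) * xi q γ δ (n-1) w
            + ((1 + q^(n-1)) / (2 * q^(n-1))) * xi q γ δ n w ) := by
  obtain ⟨m, rfl⟩ : ∃ m, n = m + 1 := ⟨n - 1, (Nat.succ_pred_eq_of_pos hn).symm⟩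
  intro w hw hD1 hD2
  rw [hp] at hD1 hD2
  have hp0 : p ≠ 0 := by
    intro h; apply hq0; rw [← hp, h]; ring
  have hq1' : q - 1 ≠ 0 := sub_ne_zero.mpr hq1
  have h1q : (1 : ℂ) - q ≠ 0 := sub_ne_zero.mpr (Ne.symm hq1)
  have hqw : q * w ≠ 0 := mul_ne_zero hq0 hw
  have hqm : (q : ℂ)^m ≠ 0 := pow_ne_zero _ hq0
  have hqm1 : (q : ℂ)^(m+1) ≠ 0 := pow_ne_zero _ hq0
  have hwm1 : w^(m+1) ≠ 0 := pow_ne_zero _ hw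
  have hDp_eq : mu q γ δ (q*w) - mu q γ δ w = (1-q)*(1-(γ*δ)*q^2*w^2)/(q*w) := by
    simp only [mu]; field_simp; ring
  have hDm_eq : mu q γ δ w - mu q γ δ (w/q) = (1-q)*(1-(γ*δ)*w^2)/w := by
    simp only [mu]; field_simp; ring
  have hS2 : 1 - (γ*δ)*q^2*w^2 ≠ 0 := by
    intro h; apply hD1
    rw [show q * w = q * w from rfl] at *
    rw [hDp_eq, h, mul_zero, zero_div]
  have hS1 : 1 - (γ*δ)*w^2 ≠ 0 := by
    intro h; apply hD2; rw [hDm_eq, h, mul_zero, zero_div]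
  have hden1 : (1-q)*(1-(γ*δ)*q^2*w^2) ≠ 0 := mul_ne_zero h1q hS2
  have hden3 : (1-q)*(1-(γ*δ)*w^2) ≠ 0 := mul_ne_zero h1q hS1
  have hden2 : (q-1)*w ≠ 0 := mul_ne_zero hq1' hw
  have hpt1 : p * (p * w) = q * w := by rw [← hp]; ring
  have hpt2 : p * w / p = w := by field_simp
  have hpt3 : p * (w / p) = w := by field_simp
  have hpt4 : w / p / p = w / q := by rw [div_div, ← hp, pow_two]
  have hSD : Sq p (Dq q γ δ p (fun v => xi q γ δ (m+1) v)) w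
      = ((xi q γ δ (m+1) (q*w) - xi q γ δ (m+1) w)/((1-q)*(1-(γ*δ)*q^2*w^2)/(q*w))
         + (xi q γ δ (m+1) w - xi q γ δ (m+1) (w/q))/((1-q)*(1-(γ*δ)*w^2)/w))/2 := by
    simp only [Sq, Dq]
    rw [hpt1, hpt2, hpt3, hpt4, hDp_eq, hDm_eq]
  have rA := lemA q (γ*δ) w m
  rw [← xiP q γ δ (q*w) hqw (m+1), ← xiP q γ δ w hw (m+1), ← xiP q γ δ w hw m] at rA
  have rB := lemB q (γ*δ) w m
  rw [← xiP q γ δ w hw (m+1), ← xiR q γ δ w hw hq0 (m+1), ← xiP q γ δ w hw m] at rB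
  have rBB : xi q γ δ (m+1) w * w^(m+1)
      = (xi q γ δ m w * w^m) * ((1+γ*δ*q^(2*m+1))*w - q^m*(1+γ*δ*q*w^2)) := by
    rw [xiP q γ δ w hw (m+1), xiP q γ δ w hw m, Finset.prod_range_succ]
  have r1 := xiP q γ δ w hw 1
  rw [Finset.prod_range_one] at r1
  have e1 : xi q γ δ 1 w * ((xi q γ δ (m+1) (q*w) - xi q γ δ (m+1) w)/((1-q)*(1-(γ*δ)*q^2*w^2)/(q*w)))
      = (1 - q^(m+1))*(w-1)*(1-(γ*δ)*q^(m+1)*w)*(xi q γ δ m w)/((q-1)*w) := by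
    rw [div_div_eq_mul_div, ← mul_div_assoc, div_eq_div_iff hden1 hden2]
    apply mul_right_cancel₀ (mul_ne_zero hqm1 hwm1)
    linear_combination ((q-1)*q*w*(xi q γ δ (m+1) (q*w) * (q*w)^(m+1)
        - q^(m+1)*(xi q γ δ (m+1) w * w^(m+1)))) * r1
      + ((q-1)*q*w*(w-1)) * rA
  have e2 : xi q γ δ 1 w * ((xi q γ δ (m+1) w - xi q γ δ (m+1) (w/q))/((1-q)*(1-(γ*δ)*w^2)/w))
      = (1 - q^(m+1))*(1-(γ*δ)*q*w)*(w-q^m)*(xi q γ δ m w)/((q-1)*w) := by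
    rw [div_div_eq_mul_div, ← mul_div_assoc, div_eq_div_iff hden3 hden2]
    apply mul_right_cancel₀ hwm1
    linear_combination ((q-1)*w*(xi q γ δ (m+1) w * w^(m+1)
        - xi q γ δ (m+1) (w/q) * w^(m+1))) * r1
      + ((q-1)*w*(1-(γ*δ)*q*w)) * rB
  rw [hSD, ← mul_div_assoc, mul_add, e1, e2]
  simp only [Nat.add_sub_cancel]
  have hXB : xi q γ δ (m+1) w
      = (xi q γ δ m w * w^m) * ((1+γ*δ*q^(2*m+1))*w - q^m*(1+γ*δ*q*w^2)) / w^(m+1) :=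
    (eq_div_iff hwm1).mpr rBB
  have hV : (1 - q ^ (m + 1)) / (q - 1) *
      (1 / 2 * (1 - q * (γ * δ) * q ^ (2 * m)) * (1 - (q ^ m)⁻¹) * xi q γ δ m w +
        (1 + q ^ m) / (2 * q ^ m) * xi q γ δ (m + 1) w)
      = ((1 - q ^ (m + 1)) * ((1 - q * (γ * δ) * q ^ (2 * m)) * (q ^ m - 1) * xi q γ δ m w
          + (1 + q ^ m) * xi q γ δ (m + 1) w)) / ((q - 1) * (2 * q ^ m)) := by
    field_simp
  rw [hV, ← add_div, div_div,
    div_eq_div_iff (mul_ne_zero hden2 two_ne_zero)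
      (mul_ne_zero hq1' (mul_ne_zero two_ne_zero hqm))]
  apply mul_right_cancel₀ hwm1
  linear_combination (-((1 - q^(m+1))*(q-1)*2*w*(1+q^m))) * rBB
end
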